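/- arXiv:1505.07576 — 2 statements merged into one kernel-verified Lean document; each statement's English description precedes it below -/
import Mathlib

section
/- Let n ≥ 1, let V : ℝⁿ → ℝ and a : ℝⁿ → ℝⁿ be twice continuously differentiable with V(0) = 0, V(z) > 0 for z ≠ 0, ∇V(z) · a(z) < 0 for z ≠ 0, and a(0) = 0. Let P := Hess V(0) and A := the Jacobian of a at 0. Then zᵀ (P A) z ≤ 0 for all z ∈ ℝⁿ. -/
open Filter Asymptotics Topology

set_option maxHeartbeats 1000000

theorem stmt_3 (n : ℕ) (hn : 1 ≤ n)
    (V : EuclideanSpace ℝ (Fin n) → ℝ) (a : EuclideanSpace ℝ (Fin n) → EuclideanSpace ℝ (Fin n))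
    (hV : ContDiff ℝ 2 V) (ha : ContDiff ℝ 2 a)
    (hV0 : V 0 = 0) (hVpos : ∀ z, z ≠ 0 → 0 < V z)
    (hdiss : ∀ z, z ≠ 0 → fderiv ℝ V z (a z) < 0)
    (ha0 : a 0 = 0) :
    ∀ z : EuclideanSpace ℝ (Fin n),
      fderiv ℝ (fderiv ℝ V) 0 z (fderiv ℝ a 0 z) ≤ 0 := by
  intro z
  by_cases hz : z = 0
  · subst hz; simp
  have had : Differentiable ℝ a := ha.differentiable (by norm_num)
  have hfd : Differentiable ℝ (fderiv ℝ V) :=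
    (hV.fderiv_right (m := 1) (by norm_num)).differentiable one_ne_zero
  set B := fderiv ℝ (fderiv ℝ V) 0 with hB
  set A := fderiv ℝ a 0 with hA
  -- fderiv V 0 = 0 since 0 is a local minimum
  have hmin : IsLocalMin V 0 := Filter.Eventually.of_forall (fun x => by
    rcases eq_or_ne x 0 with rfl | hx
    · exact le_rfl
    · rw [hV0]; exact (hVpos x hx).le)
  have hDV0 : fderiv ℝ V 0 = 0 := hmin.fderiv_eq_zero
  -- derivative of the line t ↦ t • z
  have hc : ∀ t : ℝ, HasDerivAt (fun s : ℝ => s • z) z t := fun t => by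
    simpa using (hasDerivAt_id t).smul_const z
  have hf : HasDerivAt (fun t : ℝ => fderiv ℝ V (t • z)) (B z) 0 := by
    have h1 : HasFDerivAt (fderiv ℝ V) B ((0:ℝ) • z) := by
      simpa using (hfd 0).hasFDerivAt
    exact h1.comp_hasDerivAt 0 (hc 0)
  have hg : HasDerivAt (fun t : ℝ => a (t • z)) (A z) 0 := by
    have h1 : HasFDerivAt a A ((0:ℝ) • z) := by
      simpa using (had 0).hasFDerivAt
    exact h1.comp_hasDerivAt 0 (hc 0)
  -- slope limits
  have hfs : Tendsto (fun t : ℝ => t⁻¹ • fderiv ℝ V (t • z)) (𝓝[≠] (0:ℝ)) (𝓝 (B z)) := by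
    refine (hasDerivAt_iff_tendsto_slope.mp hf).congr'
      (Filter.eventually_of_mem self_mem_nhdsWithin (fun t ht => ?_))
    simp [slope_def_module, hDV0]
  have hgs : Tendsto (fun t : ℝ => t⁻¹ • a (t • z)) (𝓝[≠] (0:ℝ)) (𝓝 (A z)) := by
    refine (hasDerivAt_iff_tendsto_slope.mp hg).congr'
      (Filter.eventually_of_mem self_mem_nhdsWithin (fun t ht => ?_))
    simp [slope_def_module, ha0]
  have hprod : Tendsto (fun t : ℝ => (t⁻¹ • fderiv ℝ V (t • z)) (t⁻¹ • a (t • z)))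
      (𝓝[≠] (0:ℝ)) (𝓝 (B z (A z))) := by
    have hcont : Continuous fun p : (EuclideanSpace ℝ (Fin n) →L[ℝ] ℝ) × EuclideanSpace ℝ (Fin n)
        => p.1 p.2 := isBoundedBilinearMap_apply.continuous
    exact (hcont.tendsto (B z, A z)).comp (hfs.prodMk_nhds hgs)
  have hnonpos : ∀ᶠ t : ℝ in 𝓝[≠] (0:ℝ),
      (t⁻¹ • fderiv ℝ V (t • z)) (t⁻¹ • a (t • z)) ≤ 0 := by
    refine Filter.eventually_of_mem self_mem_nhdsWithin (fun t ht => ?_)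
    have htz : t • z ≠ 0 := smul_ne_zero ht hz
    have hw : fderiv ℝ V (t • z) (a (t • z)) < 0 := hdiss _ htz
    have : (t⁻¹ • fderiv ℝ V (t • z)) (t⁻¹ • a (t • z))
        = t⁻¹ * (t⁻¹ * fderiv ℝ V (t • z) (a (t • z))) := by
      simp [ContinuousLinearMap.smul_apply, map_smul, smul_eq_mul]
    rw [this]
    nlinarith [mul_self_nonneg t⁻¹]
  exact le_of_tendsto hprod hnonpos
end

section
/- Let n ≥ 1, let V : ℝⁿ → ℝ and a : ℝⁿ → ℝⁿ be C² with V(0) = 0, a(0) = 0, Hess V(0) positive definite, the Jacobian A of a at 0 invertible, and ∇V(z)·a(z) < 0 for all z ≠ 0. Then the matrix P A, with P := Hess V(0), has the property that zᵀ(PA)z ≤ 0 for all z; moreover if additionally zᵀ(PA)z < 0 for all z ≠ 0, then there exist C > 0 and ε > 0 such that |∇V(z) · a(z)| ≥ C |z|² for all |z| ≤ ε. -/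
open Asymptotics Filter Topology

set_option maxHeartbeats 1000000 in
theorem stmt_5 (n : ℕ) (hn : 1 ≤ n)
    (V : EuclideanSpace ℝ (Fin n) → ℝ) (a : EuclideanSpace ℝ (Fin n) → EuclideanSpace ℝ (Fin n))
    (hV : ContDiff ℝ 2 V) (ha : ContDiff ℝ 2 a)
    (hV0 : V 0 = 0) (ha0 : a 0 = 0)
    (hP : ∀ z, z ≠ 0 → 0 < fderiv ℝ (fderiv ℝ V) 0 z z)
    (hA : Function.Bijective (fderiv ℝ a 0))
    (hdiss : ∀ z, z ≠ 0 → fderiv ℝ V z (a z) < 0) :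
    (∀ z : EuclideanSpace ℝ (Fin n), fderiv ℝ (fderiv ℝ V) 0 z (fderiv ℝ a 0 z) ≤ 0) ∧
    ((∀ z : EuclideanSpace ℝ (Fin n), z ≠ 0 → fderiv ℝ (fderiv ℝ V) 0 z (fderiv ℝ a 0 z) < 0) →
      ∃ C > (0 : ℝ), ∃ ε > (0 : ℝ), ∀ z : EuclideanSpace ℝ (Fin n),
        ‖z‖ ≤ ε → |fderiv ℝ V z (a z)| ≥ C * ‖z‖ ^ 2) := by
  set H := fderiv ℝ (fderiv ℝ V) 0 with hHdef
  set A := fderiv ℝ a 0 with hAdef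
  have hV' : ContDiff ℝ 1 (fderiv ℝ V) := hV.fderiv_right (by norm_num)
  have hdV : DifferentiableAt ℝ (fderiv ℝ V) 0 := (hV'.differentiable (by norm_num)) 0
  have hda : HasFDerivAt a A 0 := (ha.differentiable (by norm_num) 0).hasFDerivAt
  have hg : DifferentiableAt ℝ (fun z => fderiv ℝ V z (a z)) 0 :=
    hdV.clm_apply hda.differentiableAt
  have hg0 : fderiv ℝ V 0 (a 0) = 0 := by rw [ha0]; simp
  have hgle : ∀ z, fderiv ℝ V z (a z) ≤ 0 := by
    intro z
    rcases eq_or_ne z 0 with rfl | hz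
    · exact le_of_eq hg0
    · exact (hdiss z hz).le
  have hmax : IsLocalMax (fun z => fderiv ℝ V z (a z)) 0 :=
    Filter.Eventually.of_forall (fun z => by simpa [hg0] using hgle z)
  have hfd0 : fderiv ℝ (fun z => fderiv ℝ V z (a z)) 0 = 0 := hmax.fderiv_eq_zero
  have hcomp : fderiv ℝ (fun z => fderiv ℝ V z (a z)) 0
      = (fderiv ℝ V 0).comp (fderiv ℝ a 0) + (fderiv ℝ (fderiv ℝ V) 0).flip (a 0) := by
    exact fderiv_clm_apply hdV hda.differentiableAt
  have hL : fderiv ℝ V 0 = 0 := by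
    have h1 : ∀ w, fderiv ℝ V 0 (A w) = 0 := by
      intro w
      have := congrArg (fun (T : EuclideanSpace ℝ (Fin n) →L[ℝ] ℝ) => T w) (hfd0.symm.trans hcomp)
      simpa [ha0, eq_comm] using this
    ext w
    obtain ⟨u, hu⟩ := hA.2 w
    simpa [hu] using h1 u
  have h2 : (fun z => fderiv ℝ V z - H z) =o[𝓝 (0:EuclideanSpace ℝ (Fin n))] fun z => z := by
    have := hdV.hasFDerivAt.isLittleO
    simpa [hL] using this
  have h3 : (fun z => a z - A z) =o[𝓝 (0:EuclideanSpace ℝ (Fin n))] fun z => z := by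
    have := hda.isLittleO
    simpa [ha0] using this
  have haO : (fun z => a z) =O[𝓝 (0:EuclideanSpace ℝ (Fin n))] fun z => z := by
    have := hda.differentiableAt.isBigO_sub
    simpa [ha0] using this
  have hHO : (fun z : EuclideanSpace ℝ (Fin n) => H z)
      =O[𝓝 (0:EuclideanSpace ℝ (Fin n))] fun z => z := H.isBigO_comp _ _
  have t1 : (fun z => (fderiv ℝ V z - H z) (a z)) =o[𝓝 (0:EuclideanSpace ℝ (Fin n))]
      fun z => ‖z‖ * ‖z‖ := by
    have hb : (fun z => ‖fderiv ℝ V z - H z‖ * ‖a z‖) =o[𝓝 (0:EuclideanSpace ℝ (Fin n))]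
        fun z => ‖z‖ * ‖z‖ := h2.norm_norm.mul_isBigO haO.norm_norm
    refine (isBigO_of_le _ fun z => ?_).trans_isLittleO hb
    simp only [Real.norm_eq_abs]
    calc ‖(fderiv ℝ V z - H z) (a z)‖ ≤ ‖fderiv ℝ V z - H z‖ * ‖a z‖ :=
        ContinuousLinearMap.le_opNorm _ _
      _ ≤ |‖fderiv ℝ V z - H z‖ * ‖a z‖| := le_abs_self _
  have t2 : (fun z => (H z) (a z - A z)) =o[𝓝 (0:EuclideanSpace ℝ (Fin n))]
      fun z => ‖z‖ * ‖z‖ := by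
    have hb : (fun z => ‖H z‖ * ‖a z - A z‖) =o[𝓝 (0:EuclideanSpace ℝ (Fin n))]
        fun z => ‖z‖ * ‖z‖ := hHO.norm_norm.mul_isLittleO h3.norm_norm
    refine (isBigO_of_le _ fun z => ?_).trans_isLittleO hb
    simp only [Real.norm_eq_abs]
    calc ‖(H z) (a z - A z)‖ ≤ ‖H z‖ * ‖a z - A z‖ := ContinuousLinearMap.le_opNorm _ _
      _ ≤ |‖H z‖ * ‖a z - A z‖| := le_abs_self _
  have key' : (fun z => fderiv ℝ V z (a z) - H z (A z)) =o[𝓝 (0:EuclideanSpace ℝ (Fin n))]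
      fun z => ‖z‖ * ‖z‖ := by
    refine (t1.add t2).congr_left fun z => ?_
    simp only [map_sub, ContinuousLinearMap.sub_apply]
    ring
  have key : (fun z => fderiv ℝ V z (a z) - H z (A z)) =o[𝓝 (0:EuclideanSpace ℝ (Fin n))]
      fun z => ‖z‖ ^ 2 := by simpa [pow_two] using key'
  -- homogeneity of q
  have hq_smul : ∀ (s : ℝ) (z : EuclideanSpace ℝ (Fin n)),
      H (s • z) (A (s • z)) = s ^ 2 * (H z (A z)) := by
    intro s z
    simp only [map_smul, ContinuousLinearMap.smul_apply, smul_eq_mul]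
    ring
  -- Part 1
  have part1 : ∀ z : EuclideanSpace ℝ (Fin n), H z (A z) ≤ 0 := by
    intro z
    by_contra hpos
    push_neg at hpos
    have hz : z ≠ 0 := by
      rintro rfl; simp at hpos
    have hznorm : (0:ℝ) < ‖z‖ := norm_pos_iff.mpr hz
    have hc : (0:ℝ) < H z (A z) / (2 * ‖z‖ ^ 2) := by positivity
    have hev := key.def hc
    rw [Metric.eventually_nhds_iff] at hev
    obtain ⟨δ, hδ, hball⟩ := hev
    set t : ℝ := δ / (2 * ‖z‖) with htdef
    have ht : 0 < t := by positivity
    have hwlt : dist (t • z) (0 : EuclideanSpace ℝ (Fin n)) < δ := by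
      rw [dist_zero_right, norm_smul, Real.norm_eq_abs, abs_of_pos ht, htdef]
      rw [div_mul_eq_mul_div, mul_comm]
      calc ‖z‖ * δ / (2 * ‖z‖) = δ / 2 := by field_simp
        _ < δ := by linarith
    have hb := hball hwlt
    rw [hq_smul t z] at hb
    have hnw : ‖t • z‖ = t * ‖z‖ := by
      rw [norm_smul, Real.norm_eq_abs, abs_of_pos ht]
    have hb2 : |fderiv ℝ V (t • z) (a (t • z)) - t ^ 2 * (H z (A z))|
        ≤ t ^ 2 * (H z (A z)) / 2 := by
      have : ‖‖t • z‖ ^ 2‖ = t ^ 2 * ‖z‖ ^ 2 := by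
        rw [hnw]; rw [Real.norm_eq_abs, abs_of_nonneg (by positivity)]; ring
      rw [Real.norm_eq_abs] at hb
      rw [this] at hb
      calc |fderiv ℝ V (t • z) (a (t • z)) - t ^ 2 * H z (A z)|
          ≤ H z (A z) / (2 * ‖z‖ ^ 2) * (t ^ 2 * ‖z‖ ^ 2) := hb
        _ = t ^ 2 * (H z (A z)) / 2 := by field_simp
    have hgw := hgle (t • z)
    have hb3 := (abs_le.mp hb2).1
    have hpos2 : 0 < t ^ 2 * (H z (A z)) := by positivity
    linarith
  refine ⟨part1, ?_⟩
  intro hstrict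
  -- continuity of q
  have hqcont : Continuous fun z : EuclideanSpace ℝ (Fin n) => H z (A z) :=
    H.continuous.clm_apply A.continuous
  haveI : Nonempty (Fin n) := ⟨⟨0, hn⟩⟩
  have hsph : (Metric.sphere (0 : EuclideanSpace ℝ (Fin n)) 1).Nonempty :=
    NormedSpace.sphere_nonempty.mpr zero_le_one
  obtain ⟨z₀, hz₀mem, hz₀max⟩ := (isCompact_sphere (0 : EuclideanSpace ℝ (Fin n)) 1).exists_isMaxOn
    hsph hqcont.continuousOn
  have hz₀ : z₀ ≠ 0 := by
    intro h; rw [mem_sphere_zero_iff_norm, h] at hz₀mem; simp at hz₀mem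
  obtain ⟨c, hcpos, hcq⟩ : ∃ c : ℝ, 0 < c ∧ (H z₀) (A z₀) = -c :=
    ⟨-(H z₀ (A z₀)), by have := hstrict z₀ hz₀; linarith, by ring⟩
  have hqneg : ∀ z : EuclideanSpace ℝ (Fin n), H z (A z) ≤ -c * ‖z‖ ^ 2 := by
    intro z
    rcases eq_or_ne z 0 with rfl | hz
    · simp
    · have hzn : (0:ℝ) < ‖z‖ := norm_pos_iff.mpr hz
      have hu : (‖z‖⁻¹ • z) ∈ Metric.sphere (0 : EuclideanSpace ℝ (Fin n)) 1 := by
        rw [mem_sphere_zero_iff_norm, norm_smul, Real.norm_eq_abs, abs_of_pos (by positivity)]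
        field_simp
      have hle := hz₀max hu
      have hzz : z = ‖z‖ • (‖z‖⁻¹ • z) := by
        rw [smul_smul]; rw [mul_inv_cancel₀ hzn.ne']; simp
      calc H z (A z) = ‖z‖ ^ 2 * (H (‖z‖⁻¹ • z) (A (‖z‖⁻¹ • z))) := by
            conv_lhs => rw [hzz]
            exact hq_smul _ _
        _ ≤ ‖z‖ ^ 2 * (H z₀ (A z₀)) := by
            apply mul_le_mul_of_nonneg_left hle (by positivity)
        _ = -c * ‖z‖ ^ 2 := by rw [hcq]; ring
  have hev := key.def (show (0:ℝ) < c / 2 by linarith)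
  rw [Metric.eventually_nhds_iff] at hev
  obtain ⟨δ, hδ, hball⟩ := hev
  refine ⟨c / 2, by linarith, δ / 2, by linarith, fun z hz => ?_⟩
  have hdist : dist z (0 : EuclideanSpace ℝ (Fin n)) < δ := by
    rw [dist_zero_right]; linarith
  have hb := hball hdist
  rw [Real.norm_eq_abs, Real.norm_eq_abs, abs_of_nonneg (by positivity : (0:ℝ) ≤ ‖z‖ ^ 2)] at hb
  have hq := hqneg z
  have habs := abs_le.mp hb
  have hgz : fderiv ℝ V z (a z) ≤ -(c / 2) * ‖z‖ ^ 2 := by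
    have h2' := habs.2
    linarith
  have : -(fderiv ℝ V z (a z)) ≥ c / 2 * ‖z‖ ^ 2 := by linarith
  calc c / 2 * ‖z‖ ^ 2 ≤ -(fderiv ℝ V z (a z)) := this
    _ ≤ |fderiv ℝ V z (a z)| := neg_le_abs _
end
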